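/- Let f ∈ H^{0,1}(ℝ⁺) (i.e. f ∈ L²(ℝ⁺) with x·f(x) ∈ L²(ℝ⁺)) and g ∈ H^{1,1}(ℝ⁺) (g absolutely continuous with g, g', x·g ∈ L²(ℝ⁺)). Then the function x ↦ ∫_x^∞ f(y)g(y) dy belongs to H^{1,1}(ℝ⁺) and its H^{1,1}-norm is bounded by c·‖f‖_{H^{0,1}(ℝ⁺)}·‖g‖_{H^{1,1}(ℝ⁺)} for some absolute constant c. -/

import Mathlib

open MeasureTheory Set Metric Filter Topology intervalIntegral
open scoped ENNReal NNReal Interval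

section helpers
variable {u v : ℝ → ℂ}

private lemma half_half : (1:ℝ≥0∞)/1 = 1/2 + 1/2 := by
  simp only [one_div, inv_one]
  rw [ENNReal.inv_two_add_inv_two]


/-- product of two L² functions is integrable -/
private lemma mulL1 (hu : MemLp u 2 (volume.restrict (Ioi (0:ℝ))))
    (hv : MemLp v 2 (volume.restrict (Ioi (0:ℝ)))) :
    Integrable (fun y => u y * v y) (volume.restrict (Ioi (0:ℝ))) := by
  have := (hv.smul hu : MemLp (u • v) 1 (volume.restrict (Ioi (0:ℝ))))
  exact memLp_one_iff_integrable.mp this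

private lemma mulL1R (hu : MemLp u 2 (volume.restrict (Ioi (0:ℝ))))
    (hv : MemLp v 2 (volume.restrict (Ioi (0:ℝ)))) :
    Integrable (fun y => ‖u y‖ * ‖v y‖) (volume.restrict (Ioi (0:ℝ))) := by
  have := ((hv.norm).smul (hu.norm) :
    MemLp ((fun y => ‖u y‖) • (fun y => ‖v y‖)) 1 (volume.restrict (Ioi (0:ℝ))))
  exact memLp_one_iff_integrable.mp this

end helpers

section CS
variable {u v : ℝ → ℂ}

private lemma restr_le (s : ℝ) (hs : (0:ℝ) ≤ s) :
    volume.restrict (Ioi s) ≤ volume.restrict (Ioi (0:ℝ)) :=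
  Measure.restrict_mono (Ioi_subset_Ioi hs) le_rfl

private lemma eLp_restr_le {w : ℝ → ℂ} (hw : MemLp w 2 (volume.restrict (Ioi (0:ℝ))))
    {s : ℝ} (hs : (0:ℝ) ≤ s) :
    (eLpNorm w 2 (volume.restrict (Ioi s))).toReal ≤
      (eLpNorm w 2 (volume.restrict (Ioi (0:ℝ)))).toReal :=
  ENNReal.toReal_mono hw.eLpNorm_ne_top (eLpNorm_mono_measure _ (restr_le s hs))

/-- Cauchy-Schwarz on the tail `Ioi s`. -/
private lemma CS (hu : MemLp u 2 (volume.restrict (Ioi (0:ℝ))))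
    (hv : MemLp v 2 (volume.restrict (Ioi (0:ℝ)))) {s : ℝ} (hs : (0:ℝ) ≤ s) :
    ∫ y in Ioi s, ‖u y‖ * ‖v y‖ ≤
      (eLpNorm u 2 (volume.restrict (Ioi (0:ℝ)))).toReal *
      (eLpNorm v 2 (volume.restrict (Ioi (0:ℝ)))).toReal := by
  have hpq : Real.HolderConjugate 2 2 := Real.holderConjugate_iff.mpr ⟨one_lt_two, by norm_num⟩
  have h2 : (ENNReal.ofReal (2:ℝ)) = (2:ℝ≥0∞) := by norm_num
  have hu' : MemLp u 2 (volume.restrict (Ioi s)) := hu.mono_measure (restr_le s hs)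
  have hv' : MemLp v 2 (volume.restrict (Ioi s)) := hv.mono_measure (restr_le s hs)
  have key := integral_mul_norm_le_Lp_mul_Lq (μ := volume.restrict (Ioi s)) hpq
    (h2 ▸ hu') (h2 ▸ hv')
  have eq2 : ((2:ℝ≥0∞)).toReal = (2:ℝ) := by norm_num
  have hnu := hu'.eLpNorm_eq_integral_rpow_norm (by norm_num) (by norm_num)
  have hnv := hv'.eLpNorm_eq_integral_rpow_norm (by norm_num) (by norm_num)
  rw [eq2] at hnu hnv
  have hIu : (0:ℝ) ≤ (∫ y in Ioi s, ‖u y‖ ^ (2:ℝ)) ^ ((2:ℝ))⁻¹ := by positivity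
  have hIv : (0:ℝ) ≤ (∫ y in Ioi s, ‖v y‖ ^ (2:ℝ)) ^ ((2:ℝ))⁻¹ := by positivity
  have hu2 : (∫ y in Ioi s, ‖u y‖ ^ (2:ℝ)) ^ ((2:ℝ))⁻¹ =
      (eLpNorm u 2 (volume.restrict (Ioi s))).toReal := by
    rw [hnu, ENNReal.toReal_ofReal hIu]
  have hv2 : (∫ y in Ioi s, ‖v y‖ ^ (2:ℝ)) ^ ((2:ℝ))⁻¹ =
      (eLpNorm v 2 (volume.restrict (Ioi s))).toReal := by
    rw [hnv, ENNReal.toReal_ofReal hIv]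
  have : ∫ y in Ioi s, ‖u y‖ * ‖v y‖ ≤
      (eLpNorm u 2 (volume.restrict (Ioi s))).toReal *
      (eLpNorm v 2 (volume.restrict (Ioi s))).toReal := by
    rw [← hu2, ← hv2]
    simpa [one_div] using key
  exact this.trans (mul_le_mul (eLp_restr_le hu hs) (eLp_restr_le hv hs)
    ENNReal.toReal_nonneg ENNReal.toReal_nonneg)
end CS

section tails
variable {u v : ℝ → ℂ}

private lemma tail_norm_le (s : ℝ) :
    ‖∫ y in Ioi s, u y * v y‖ ≤ ∫ y in Ioi s, ‖u y‖ * ‖v y‖ := by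
  refine (MeasureTheory.norm_integral_le_integral_norm _).trans_eq ?_
  exact integral_congr_ae (Eventually.of_forall fun y => norm_mul _ _)

private lemma tail_weight_one (hu : MemLp u 2 (volume.restrict (Ioi (0:ℝ))))
    (hxu : MemLp (fun x : ℝ => (x:ℂ) * u x) 2 (volume.restrict (Ioi (0:ℝ))))
    (hv : MemLp v 2 (volume.restrict (Ioi (0:ℝ)))) {s : ℝ} (hs : (0:ℝ) < s) :
    s * ∫ y in Ioi s, ‖u y‖ * ‖v y‖ ≤
      ∫ y in Ioi s, ‖(y:ℂ) * u y‖ * ‖v y‖ := by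
  rw [← MeasureTheory.integral_const_mul]
  refine setIntegral_mono_on
    (((mulL1R hu hv).mono_measure (restr_le s hs.le)).const_mul s)
    ((mulL1R hxu hv).mono_measure (restr_le s hs.le)) measurableSet_Ioi ?_
  intro y hy
  have hy' : s ≤ y := (le_of_lt hy)
  have : ‖(y:ℂ) * u y‖ = y * ‖u y‖ := by
    rw [norm_mul, Complex.norm_real, Real.norm_of_nonneg (hs.le.trans hy')]
  rw [this, ← mul_assoc, mul_assoc s, mul_assoc y]
  exact mul_le_mul_of_nonneg_right hy' (by positivity)

private lemma tail_weight_two (hu : MemLp u 2 (volume.restrict (Ioi (0:ℝ))))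
    (hxu : MemLp (fun x : ℝ => (x:ℂ) * u x) 2 (volume.restrict (Ioi (0:ℝ))))
    (hv : MemLp v 2 (volume.restrict (Ioi (0:ℝ))))
    (hxv : MemLp (fun x : ℝ => (x:ℂ) * v x) 2 (volume.restrict (Ioi (0:ℝ))))
    {s : ℝ} (hs : (0:ℝ) < s) :
    s ^ 2 * ∫ y in Ioi s, ‖u y‖ * ‖v y‖ ≤
      ∫ y in Ioi s, ‖(y:ℂ) * u y‖ * ‖(y:ℂ) * v y‖ := by
  rw [← MeasureTheory.integral_const_mul]
  refine setIntegral_mono_on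
    (((mulL1R hu hv).mono_measure (restr_le s hs.le)).const_mul (s^2))
    ((mulL1R hxu hxv).mono_measure (restr_le s hs.le)) measurableSet_Ioi ?_
  intro y hy
  have hy' : s ≤ y := (le_of_lt hy)
  have hy0 : (0:ℝ) ≤ y := hs.le.trans hy'
  have h1 : ‖(y:ℂ) * u y‖ = y * ‖u y‖ := by
    rw [norm_mul, Complex.norm_real, Real.norm_of_nonneg hy0]
  have h2 : ‖(y:ℂ) * v y‖ = y * ‖v y‖ := by
    rw [norm_mul, Complex.norm_real, Real.norm_of_nonneg hy0]
  rw [h1, h2]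
  calc s^2 * (‖u y‖ * ‖v y‖) ≤ y^2 * (‖u y‖ * ‖v y‖) := by
        refine mul_le_mul_of_nonneg_right ?_ (by positivity)
        exact pow_le_pow_left₀ hs.le hy' 2
    _ = y * ‖u y‖ * (y * ‖v y‖) := by ring

end tails

section L4

/-- integrability and L² bound from decaying pointwise bounds -/
private lemma memLp_of_two_bounds (T : ℝ → ℂ)
    (hm : AEStronglyMeasurable T (volume.restrict (Ioi (0:ℝ))))
    {C₁ C₂ : ℝ} (hC₁ : 0 ≤ C₁) (hC₂ : 0 ≤ C₂)
    (h₁ : ∀ x ∈ Ioi (0:ℝ), x ≤ 1 → ‖T x‖ ≤ C₁)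
    (h₂ : ∀ x ∈ Ioi (0:ℝ), 1 ≤ x → ‖T x‖ ≤ C₂ / x) :
    MemLp T 2 (volume.restrict (Ioi (0:ℝ))) ∧
      (eLpNorm T 2 (volume.restrict (Ioi (0:ℝ)))).toReal ≤ C₁ + C₂ := by
  set M : ℝ → ℝ := fun x =>
    (Ioc (0:ℝ) 1).indicator (fun _ => C₁^2) x + (Ioi (1:ℝ)).indicator (fun x => (C₂/x)^2) x
    with hM
  have hint2 : IntegrableOn (fun x : ℝ => (C₂/x)^2) (Ioi (1:ℝ)) := by
    have hrp : IntegrableOn (fun x : ℝ => x ^ (-2:ℝ)) (Ioi (1:ℝ)) :=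
      integrableOn_Ioi_rpow_of_lt (by norm_num) one_pos
    refine MeasureTheory.IntegrableOn.congr_fun (hrp.const_mul (C₂^2))
      (fun x hx => ?_) measurableSet_Ioi
    have hx0 : (0:ℝ) < x := lt_trans one_pos hx
    rw [div_pow, Real.rpow_neg hx0.le]
    rw [show ((2:ℝ)) = ((2:ℕ):ℝ) by norm_num, Real.rpow_natCast]
    field_simp
  have hI1 : Integrable ((Ioc (0:ℝ) 1).indicator (fun _ => C₁^2)) volume := by
    rw [integrable_indicator_iff measurableSet_Ioc]
    exact (integrableOn_const_iff).mpr (Or.inr (by simp [Real.volume_Ioc]))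
  have hI2 : Integrable ((Ioi (1:ℝ)).indicator (fun x : ℝ => (C₂/x)^2)) volume := by
    rw [integrable_indicator_iff measurableSet_Ioi]
    exact hint2
  have hMint : Integrable M volume := hI1.add hI2
  have hMint' : Integrable M (volume.restrict (Ioi (0:ℝ))) := hMint.restrict
  have hSm : AEStronglyMeasurable (fun x => ‖T x‖^2) (volume.restrict (Ioi (0:ℝ))) :=
    (hm.norm.aemeasurable.pow_const 2).aestronglyMeasurable
  have hbound : ∀ᵐ x ∂(volume.restrict (Ioi (0:ℝ))), ‖T x‖^2 ≤ M x := by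
    filter_upwards [self_mem_ae_restrict (measurableSet_Ioi : MeasurableSet (Ioi (0:ℝ)))]
      with x hx
    rcases le_or_gt x 1 with hx1 | hx1
    · have hMx : M x = C₁^2 := by
        rw [hM]
        have h0 : (0:ℝ) < x := hx
        simp [Set.indicator_apply, mem_Ioc, mem_Ioi, h0, hx1, not_lt.mpr hx1]
      rw [hMx]
      exact pow_le_pow_left₀ (norm_nonneg _) (h₁ x hx hx1) 2
    · have hMx : M x = (C₂/x)^2 := by
        rw [hM]
        have h0 : (0:ℝ) < x := hx
        simp [Set.indicator_apply, mem_Ioc, mem_Ioi, hx1, not_le.mpr hx1]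
      rw [hMx]
      exact pow_le_pow_left₀ (norm_nonneg _) (h₂ x hx hx1.le) 2
  have hbound' : ∀ᵐ x ∂(volume.restrict (Ioi (0:ℝ))), ‖‖T x‖^2‖ ≤ M x := by
    filter_upwards [hbound] with x hx
    rwa [Real.norm_of_nonneg (by positivity)]
  have hSint : Integrable (fun x => ‖T x‖^2) (volume.restrict (Ioi (0:ℝ))) :=
    Integrable.mono' hMint' hSm hbound'
  have hmem : MemLp T 2 (volume.restrict (Ioi (0:ℝ))) :=
    (memLp_two_iff_integrable_sq_norm hm).mpr hSint
  refine ⟨hmem, ?_⟩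
  have hrw := hmem.eLpNorm_eq_integral_rpow_norm (by norm_num) (by norm_num)
  rw [hrw, ENNReal.toReal_ofReal (by positivity)]
  have htr : ((2:ℝ≥0∞)).toReal = (2:ℝ) := by norm_num
  rw [htr]
  have hMval : ∫ x in Ioi (0:ℝ), M x ≤ C₁^2 + C₂^2 := by
    have e1 : ∫ x in Ioi (0:ℝ), (Ioc (0:ℝ) 1).indicator (fun _ => C₁^2) x = C₁^2 := by
      rw [MeasureTheory.integral_indicator measurableSet_Ioc, Measure.restrict_restrict measurableSet_Ioc]
      rw [show Ioc (0:ℝ) 1 ∩ Ioi (0:ℝ) = Ioc (0:ℝ) 1 from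
        inter_eq_self_of_subset_left Ioc_subset_Ioi_self]
      simp [Real.volume_Ioc]
    have e2 : ∫ x in Ioi (0:ℝ), (Ioi (1:ℝ)).indicator (fun x => (C₂/x)^2) x = C₂^2 := by
      rw [MeasureTheory.integral_indicator measurableSet_Ioi, Measure.restrict_restrict measurableSet_Ioi]
      rw [show Ioi (1:ℝ) ∩ Ioi (0:ℝ) = Ioi (1:ℝ) from
        inter_eq_self_of_subset_left (Ioi_subset_Ioi zero_le_one)]
      have heq : ∫ x in Ioi (1:ℝ), (C₂/x)^2 = C₂^2 * ∫ x in Ioi (1:ℝ), x ^ (-2:ℝ) := by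
        rw [← MeasureTheory.integral_const_mul]
        refine setIntegral_congr_fun measurableSet_Ioi (fun x hx => ?_)
        have hx0 : (0:ℝ) < x := lt_trans one_pos hx
        rw [div_pow, Real.rpow_neg hx0.le,
          show ((2:ℝ)) = ((2:ℕ):ℝ) by norm_num, Real.rpow_natCast]
        field_simp
      rw [heq, integral_Ioi_rpow_of_lt (by norm_num) one_pos]
      norm_num
    have : ∫ x in Ioi (0:ℝ), M x =
        (∫ x in Ioi (0:ℝ), (Ioc (0:ℝ) 1).indicator (fun _ => C₁^2) x) +
        ∫ x in Ioi (0:ℝ), (Ioi (1:ℝ)).indicator (fun x => (C₂/x)^2) x :=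
      integral_add hI1.restrict hI2.restrict
    rw [this, e1, e2]
  have hTM : ∫ x in Ioi (0:ℝ), ‖T x‖ ^ (2:ℝ) ≤ (C₁+C₂)^2 := by
    have hc : ∫ x in Ioi (0:ℝ), ‖T x‖ ^ (2:ℝ) = ∫ x in Ioi (0:ℝ), ‖T x‖ ^ (2:ℕ) := by
      refine integral_congr_ae (Eventually.of_forall (fun x => ?_))
      show ‖T x‖ ^ (2:ℝ) = ‖T x‖ ^ (2:ℕ)
      rw [show ((2:ℝ)) = ((2:ℕ):ℝ) by norm_num]
      exact Real.rpow_natCast _ 2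
    rw [hc]
    refine le_trans (integral_mono_ae hSint hMint' hbound) ?_
    refine hMval.trans ?_
    nlinarith [mul_nonneg hC₁ hC₂]
  calc (∫ x in Ioi (0:ℝ), ‖T x‖ ^ (2:ℝ)) ^ ((2:ℝ))⁻¹
      = Real.sqrt (∫ x in Ioi (0:ℝ), ‖T x‖ ^ (2:ℝ)) := by
        rw [Real.sqrt_eq_rpow, one_div]
    _ ≤ Real.sqrt ((C₁+C₂)^2) := Real.sqrt_le_sqrt hTM
    _ = C₁ + C₂ := Real.sqrt_sq (by positivity)

end L4

section deriv

private lemma interval_dev_bound (h : ℝ → ℂ) (hi : Integrable h volume) (x : ℝ)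
    {a b : ℝ} (hab : a < b) :
    ‖(∫ t in a..b, h t) - (b - a) • h x‖ ≤ ∫ t in Icc a b, ‖h t - h x‖ := by
  have hIcc : IntegrableOn (fun t => ‖h t - h x‖) (Icc a b) volume := by
    refine (Integrable.norm ?_)
    exact (hi.integrableOn.sub ((integrableOn_const_iff).mpr (Or.inr (by
      rw [Real.volume_Icc]; exact ENNReal.ofReal_lt_top))))
  have h1 : (∫ t in a..b, h t) - (b - a) • h x = ∫ t in a..b, (h t - h x) := by
    rw [intervalIntegral.integral_sub hi.intervalIntegrable
      (intervalIntegrable_const), intervalIntegral.integral_const]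
  rw [h1]
  refine (intervalIntegral.norm_integral_le_integral_norm_uIoc).trans ?_
  rw [uIoc_of_le hab.le]
  refine setIntegral_mono_set hIcc ?_ ?_
  · exact Eventually.of_forall (fun t => norm_nonneg _)
  · exact HasSubset.Subset.eventuallyLE Ioc_subset_Icc_self

private lemma ae_hasDerivAt_primitive (h : ℝ → ℂ) (hi : Integrable h volume) :
    ∀ᵐ x, HasDerivAt (fun u => ∫ t in (0:ℝ)..u, h t) (h x) x := by
  have hloc : LocallyIntegrable h volume := hi.locallyIntegrable
  filter_upwards [(IsUnifLocDoublingMeasure.vitaliFamily (volume : Measure ℝ)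
    1).ae_tendsto_average_norm_sub hloc] with x hx
  set P : ℝ → ℂ := fun u => ∫ t in (0:ℝ)..u, h t with hP
  have hsub : ∀ a b : ℝ, P b - P a = ∫ t in a..b, h t := fun a b =>
    intervalIntegral.integral_interval_sub_left hi.intervalIntegrable hi.intervalIntegrable
  rw [hasDerivAt_iff_tendsto_slope, ← nhdsLT_sup_nhdsGT, tendsto_sup]
  constructor
  · -- left limit
    have hcomp : Tendsto (fun y => ⨍ t in Icc y x, ‖h t - h x‖) (𝓝[<] x) (𝓝 0) :=
      hx.comp (Real.tendsto_Icc_vitaliFamily_left x)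
    rw [tendsto_iff_norm_sub_tendsto_zero]
    refine squeeze_zero' (Eventually.of_forall (fun y => norm_nonneg _)) ?_ hcomp
    filter_upwards [self_mem_nhdsWithin] with y (hy : y < x)
    have hyx : (0:ℝ) < x - y := by linarith
    have hs : slope P x y - h x = (x - y)⁻¹ • ((∫ t in y..x, h t) - (x - y) • h x) := by
      rw [slope_comm, slope_def_module, hsub y x, smul_sub, smul_smul,
        inv_mul_cancel₀ hyx.ne', one_smul]
    rw [hs, norm_smul, norm_inv, Real.norm_of_nonneg hyx.le]
    have hb := interval_dev_bound h hi x hy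
    have havg : ⨍ t in Icc y x, ‖h t - h x‖ =
        (x - y)⁻¹ * ∫ t in Icc y x, ‖h t - h x‖ := by
      rw [setAverage_eq, Real.volume_real_Icc_of_le hy.le, smul_eq_mul]
    rw [havg]
    exact mul_le_mul_of_nonneg_left hb (by positivity)
  · -- right limit
    have hcomp : Tendsto (fun y => ⨍ t in Icc x y, ‖h t - h x‖) (𝓝[>] x) (𝓝 0) :=
      hx.comp (Real.tendsto_Icc_vitaliFamily_right x)
    rw [tendsto_iff_norm_sub_tendsto_zero]
    refine squeeze_zero' (Eventually.of_forall (fun y => norm_nonneg _)) ?_ hcomp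
    filter_upwards [self_mem_nhdsWithin] with y (hy : x < y)
    have hyx : (0:ℝ) < y - x := by linarith
    have hs : slope P x y - h x = (y - x)⁻¹ • ((∫ t in x..y, h t) - (y - x) • h x) := by
      rw [slope_def_module, hsub x y, smul_sub, smul_smul,
        inv_mul_cancel₀ hyx.ne', one_smul]
    rw [hs, norm_smul, norm_inv, Real.norm_of_nonneg hyx.le]
    have hb := interval_dev_bound h hi x hy
    have havg : ⨍ t in Icc x y, ‖h t - h x‖ =
        (y - x)⁻¹ * ∫ t in Icc x y, ‖h t - h x‖ := by
      rw [setAverage_eq, Real.volume_real_Icc_of_le hy.le, smul_eq_mul]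
    rw [havg]
    exact mul_le_mul_of_nonneg_left hb (by positivity)

end deriv

section sup

private lemma sup_bound (g g' : ℝ → ℂ)
    (hg : MemLp g 2 (volume.restrict (Ioi (0:ℝ))))
    (hg' : MemLp g' 2 (volume.restrict (Ioi (0:ℝ))))
    (hderiv : ∀ x ∈ Ioi (0:ℝ), HasDerivAt g (g' x) x) :
    ∀ x ∈ Ioi (0:ℝ), ‖g x‖ ≤ (eLpNorm g 2 (volume.restrict (Ioi (0:ℝ)))).toReal +
      (eLpNorm g' 2 (volume.restrict (Ioi (0:ℝ)))).toReal := by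
  set B := (eLpNorm g 2 (volume.restrict (Ioi (0:ℝ)))).toReal with hB
  set B' := (eLpNorm g' 2 (volume.restrict (Ioi (0:ℝ)))).toReal with hB'
  have hB0 : 0 ≤ B := ENNReal.toReal_nonneg
  have hB'0 : 0 ≤ B' := ENNReal.toReal_nonneg
  set q : ℝ → ℝ := fun x => ‖g x‖^2 with hq
  set D : ℝ → ℝ := fun x => 2*(g x).re*(g' x).re + 2*(g x).im*(g' x).im with hD
  -- derivative of q on Ioi 0
  have hqd : ∀ x ∈ Ioi (0:ℝ), HasDerivAt q (D x) x := by
    intro x hx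
    have hre : HasDerivAt (fun y => (g y).re) ((g' x).re) x :=
      (Complex.reCLM.hasFDerivAt.comp_hasDerivAt x (hderiv x hx))
    have him : HasDerivAt (fun y => (g y).im) ((g' x).im) x :=
      (Complex.imCLM.hasFDerivAt.comp_hasDerivAt x (hderiv x hx))
    have h1 : HasDerivAt (fun y => (g y).re^2 + (g y).im^2)
        (2*(g x).re^1*(g' x).re + 2*(g x).im^1*(g' x).im) x := by
      have := (hre.fun_pow 2).fun_add (him.fun_pow 2)
      simpa using this
    have hqeq : q = fun y => (g y).re^2 + (g y).im^2 := by
      funext y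
      rw [hq]
      simp only
      rw [Complex.sq_norm, Complex.normSq_apply]
      ring
    rw [hqeq]
    simpa using h1
  -- pointwise bound on D
  have hDb : ∀ x, |D x| ≤ 2 * (‖g x‖ * ‖g' x‖) := by
    intro x
    have heq : D x = 2 * ((starRingEnd ℂ) (g x) * g' x).re := by
      rw [hD]
      simp only [Complex.mul_re, Complex.conj_re, Complex.conj_im]
      ring
    rw [heq, abs_mul, abs_two]
    refine mul_le_mul_of_nonneg_left ?_ (by norm_num)
    refine (Complex.abs_re_le_norm _).trans ?_
    rw [norm_mul, Complex.norm_conj]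
  have hDm : AEStronglyMeasurable D (volume.restrict (Ioi (0:ℝ))) := by
    have hgre := Complex.continuous_re.comp_aestronglyMeasurable hg.1
    have hgim := Complex.continuous_im.comp_aestronglyMeasurable hg.1
    have hg're := Complex.continuous_re.comp_aestronglyMeasurable hg'.1
    have hg'im := Complex.continuous_im.comp_aestronglyMeasurable hg'.1
    exact ((hgre.const_mul 2).mul hg're).add ((hgim.const_mul 2).mul hg'im)
  have hDi : Integrable D (volume.restrict (Ioi (0:ℝ))) := by
    refine Integrable.mono' ((mulL1R hg hg').const_mul 2) hDm ?_
    exact Eventually.of_forall (fun x => by simpa [Real.norm_eq_abs] using hDb x)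
  have hDint : ∫ x in Ioi (0:ℝ), |D x| ≤ 2 * (B * B') := by
    have h1 : ∫ x in Ioi (0:ℝ), |D x| ≤ ∫ x in Ioi (0:ℝ), 2*(‖g x‖*‖g' x‖) :=
      integral_mono_ae hDi.abs ((mulL1R hg hg').const_mul 2)
        (Eventually.of_forall (fun x => hDb x))
    refine h1.trans ?_
    rw [MeasureTheory.integral_const_mul]
    exact mul_le_mul_of_nonneg_left (CS hg hg' le_rfl) (by norm_num)
  have hq2 : Integrable q (volume.restrict (Ioi (0:ℝ))) := by
    rw [hq]
    exact (memLp_two_iff_integrable_sq_norm hg.1).mp hg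
  have htr : ((2:ℝ≥0∞)).toReal = (2:ℝ) := by norm_num
  have hrw := hg.eLpNorm_eq_integral_rpow_norm (by norm_num) (by norm_num)
  rw [htr] at hrw
  have hI0 : (0:ℝ) ≤ ∫ x in Ioi (0:ℝ), ‖g x‖ ^ (2:ℝ) :=
    integral_nonneg (fun x => by positivity)
  have hBI : B ^ 2 = ∫ x in Ioi (0:ℝ), ‖g x‖ ^ (2:ℝ) := by
    rw [hB, hrw, ENNReal.toReal_ofReal (by positivity), ← Real.rpow_natCast (_ ^ _) 2,
      ← Real.rpow_mul hI0]
    norm_num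
  haveI hfin : IsFiniteMeasure (volume.restrict (Ioc (0:ℝ) 1)) :=
    ⟨by rw [Measure.restrict_apply_univ, Real.volume_Ioc]; norm_num⟩
  have hμ0 : volume.restrict (Ioc (0:ℝ) 1) ≠ 0 := by
    rw [← Measure.measure_univ_ne_zero, Measure.restrict_apply_univ, Real.volume_Ioc]
    norm_num
  have hqI : Integrable q (volume.restrict (Ioc (0:ℝ) 1)) :=
    hq2.mono_measure (Measure.restrict_mono Ioc_subset_Ioi_self le_rfl)
  obtain ⟨a, haN, ha⟩ := exists_notMem_null_le_average (N := (Ioc (0:ℝ) 1)ᶜ) hμ0 hqI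
    (by rw [Measure.restrict_apply measurableSet_Ioc.compl]; simp)
  have haI : a ∈ Ioc (0:ℝ) 1 := notMem_compl_iff.mp haN
  have havg : ⨍ y, q y ∂(volume.restrict (Ioc (0:ℝ) 1)) = ∫ y in Ioc (0:ℝ) 1, q y := by
    rw [average_eq, measureReal_restrict_apply_univ, Real.volume_real_Ioc]
    norm_num
  have hqa : q a ≤ B^2 := by
    refine ha.trans ?_
    rw [havg, hBI]
    have hmono : ∫ y in Ioc (0:ℝ) 1, q y ≤ ∫ y in Ioi (0:ℝ), q y := by
      refine setIntegral_mono_set hq2 ?_ ?_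
      · exact Eventually.of_forall (fun y => by rw [hq]; positivity)
      · exact HasSubset.Subset.eventuallyLE Ioc_subset_Ioi_self
    refine hmono.trans_eq ?_
    refine integral_congr_ae (Eventually.of_forall (fun y => ?_))
    rw [hq]
    show ‖g y‖^(2:ℕ) = ‖g y‖^(2:ℝ)
    rw [show ((2:ℝ)) = ((2:ℕ):ℝ) by norm_num, Real.rpow_natCast]
  -- conclude
  intro x hx
  have hmin : (0:ℝ) < min a x := lt_min haI.1 hx
  have hII : IntegrableOn D (Ι a x) volume :=
    MeasureTheory.IntegrableOn.mono_set hDi (fun t ht => lt_trans hmin ht.1)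
  have ftc : ∫ t in a..x, D t = q x - q a := by
    refine intervalIntegral.integral_eq_sub_of_hasDerivAt (fun t ht => hqd t ?_) ?_
    · exact lt_of_lt_of_le hmin ht.1
    · rw [intervalIntegrable_iff]
      exact hII
  have h2 : ‖∫ t in a..x, D t‖ ≤ ∫ t in Ι a x, ‖D t‖ :=
    intervalIntegral.norm_integral_le_integral_norm_uIoc
  have h3 : ∫ t in Ι a x, ‖D t‖ ≤ ∫ t in Ioi (0:ℝ), ‖D t‖ := by
    refine setIntegral_mono_set hDi.norm ?_ ?_
    · exact Eventually.of_forall (fun t => norm_nonneg _)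
    · exact HasSubset.Subset.eventuallyLE (fun t ht => lt_trans hmin ht.1)
  have h4 : ∫ t in Ioi (0:ℝ), ‖D t‖ ≤ 2*(B*B') := by
    refine le_trans (le_of_eq ?_) hDint
    exact integral_congr_ae (Eventually.of_forall (fun t => Real.norm_eq_abs _))
  have hqx : q x ≤ (B + B')^2 := by
    have : q x - q a ≤ ‖∫ t in a..x, D t‖ := by
      rw [ftc] at *
      exact le_trans (le_abs_self _) (le_of_eq (Real.norm_eq_abs _).symm)
    nlinarith [sq_nonneg B']
  have : ‖g x‖ ≤ B + B' := by
    have h5 := Real.sqrt_le_sqrt hqx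
    rwa [show q x = ‖g x‖^2 from rfl, Real.sqrt_sq (norm_nonneg _),
      Real.sqrt_sq (by positivity)] at h5
  exact this


end sup

/-- The `H^{0,1}(ℝ⁺)` norm: `‖f‖_{L²(ℝ⁺)} + ‖x f‖_{L²(ℝ⁺)}`. -/
noncomputable def normH01plus (f : ℝ → ℂ) : ℝ :=
  (eLpNorm f 2 (volume.restrict (Ioi (0:ℝ)))).toReal +
  (eLpNorm (fun x : ℝ => (x : ℂ) * f x) 2 (volume.restrict (Ioi (0:ℝ)))).toReal

/-- The `H^{1,1}(ℝ⁺)` norm of `g` with derivative `g'`: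
`‖g‖_{L²} + ‖g'‖_{L²} + ‖x g‖_{L²}` on `ℝ⁺`. -/
noncomputable def normH11plus (g g' : ℝ → ℂ) : ℝ :=
  (eLpNorm g 2 (volume.restrict (Ioi (0:ℝ)))).toReal +
  (eLpNorm g' 2 (volume.restrict (Ioi (0:ℝ)))).toReal +
  (eLpNorm (fun x : ℝ => (x : ℂ) * g x) 2 (volume.restrict (Ioi (0:ℝ)))).toReal

/-- If `f ∈ H^{0,1}(ℝ⁺)` and `g ∈ H^{1,1}(ℝ⁺)`, then `x ↦ ∫_x^∞ f g` belongs to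
`H^{1,1}(ℝ⁺)` (it is square integrable, differentiable with derivative `-f g`,
and `x ↦ x ∫_x^∞ f g` is square integrable), with norm bounded by
`c ‖f‖_{H^{0,1}} ‖g‖_{H^{1,1}}` for an absolute constant `c`. -/
theorem integral_tail_mem_H11 :
    ∃ c : ℝ, 0 < c ∧
      ∀ (f g g' : ℝ → ℂ),
        MemLp f 2 (volume.restrict (Ioi (0:ℝ))) →
        MemLp (fun x : ℝ => (x : ℂ) * f x) 2 (volume.restrict (Ioi (0:ℝ))) →
        MemLp g 2 (volume.restrict (Ioi (0:ℝ))) →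
        MemLp g' 2 (volume.restrict (Ioi (0:ℝ))) →
        MemLp (fun x : ℝ => (x : ℂ) * g x) 2 (volume.restrict (Ioi (0:ℝ))) →
        (∀ x ∈ Ioi (0:ℝ), HasDerivAt g (g' x) x) →
        MemLp (fun x : ℝ => ∫ y in Ioi x, f y * g y) 2 (volume.restrict (Ioi (0:ℝ))) ∧
        (∀ᵐ x ∂(volume.restrict (Ioi (0:ℝ))),
          HasDerivAt (fun x : ℝ => ∫ y in Ioi x, f y * g y) (-(f x * g x)) x) ∧
        MemLp (fun x : ℝ => (x : ℂ) * ∫ y in Ioi x, f y * g y) 2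
          (volume.restrict (Ioi (0:ℝ))) ∧
        normH11plus (fun x : ℝ => ∫ y in Ioi x, f y * g y) (fun x => -(f x * g x)) ≤
          c * normH01plus f * normH11plus g g' := by
  refine ⟨6, by norm_num, ?_⟩
  intro f g g' hf hxf hg hg' hxg hgd
  set T : ℝ → ℂ := fun x => ∫ y in Ioi x, f y * g y with hT
  set A := (eLpNorm f 2 (volume.restrict (Ioi (0:ℝ)))).toReal with hA
  set A' := (eLpNorm (fun x : ℝ => (x:ℂ) * f x) 2 (volume.restrict (Ioi (0:ℝ)))).toReal with hA'
  set B := (eLpNorm g 2 (volume.restrict (Ioi (0:ℝ)))).toReal with hB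
  set B' := (eLpNorm g' 2 (volume.restrict (Ioi (0:ℝ)))).toReal with hB'
  set B'' := (eLpNorm (fun x : ℝ => (x:ℂ) * g x) 2 (volume.restrict (Ioi (0:ℝ)))).toReal with hB''
  have hA0 : 0 ≤ A := ENNReal.toReal_nonneg
  have hA'0 : 0 ≤ A' := ENNReal.toReal_nonneg
  have hB0 : 0 ≤ B := ENNReal.toReal_nonneg
  have hB'0 : 0 ≤ B' := ENNReal.toReal_nonneg
  have hB''0 : 0 ≤ B'' := ENNReal.toReal_nonneg
  -- the representation via a primitive
  set h : ℝ → ℂ := (Ioi (0:ℝ)).indicator (fun y => f y * g y) with hh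
  have hInt : Integrable h volume := by
    rw [hh, integrable_indicator_iff measurableSet_Ioi]
    exact mulL1 hf hg
  set P : ℝ → ℂ := fun u => ∫ t in (0:ℝ)..u, h t with hP
  set C : ℂ := ∫ y in Ioi (0:ℝ), h y with hC
  have hTrep : ∀ x ∈ Ioi (0:ℝ), T x = C - P x := by
    intro x hx
    have e1 : T x = ∫ y in Ioi x, h y := by
      refine setIntegral_congr_fun measurableSet_Ioi (fun y hy => ?_)
      exact (Set.indicator_of_mem ((Ioi_subset_Ioi (le_of_lt hx)) hy) (fun y => f y * g y)).symm
    have e2 : C = (∫ y in Ioc (0:ℝ) x, h y) + ∫ y in Ioi x, h y := by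
      rw [hC, ← setIntegral_union (Ioc_disjoint_Ioi le_rfl) measurableSet_Ioi
        hInt.integrableOn hInt.integrableOn, Ioc_union_Ioi_eq_Ioi (le_of_lt hx)]
    have e3 : P x = ∫ y in Ioc (0:ℝ) x, h y := intervalIntegral.integral_of_le (le_of_lt hx)
    rw [e1, e2, e3]
    ring
  have hPcont : Continuous fun u : ℝ => C - P u :=
    continuous_const.sub (intervalIntegral.continuous_primitive
      (fun a b => hInt.intervalIntegrable) 0)
  have hTae : T =ᵐ[volume.restrict (Ioi (0:ℝ))] fun u => C - P u := by
    filter_upwards [self_mem_ae_restrict (measurableSet_Ioi : MeasurableSet (Ioi (0:ℝ)))]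
      with x hx
    exact hTrep x hx
  have hTm : AEStronglyMeasurable T (volume.restrict (Ioi (0:ℝ))) :=
    hPcont.aestronglyMeasurable.congr hTae.symm
  have hxTm : AEStronglyMeasurable (fun x : ℝ => (x:ℂ) * T x)
      (volume.restrict (Ioi (0:ℝ))) := by
    refine (Continuous.aestronglyMeasurable
      (Complex.continuous_ofReal.mul hPcont)).congr ?_
    filter_upwards [hTae] with x hx
    rw [hx]; rfl
  -- derivative
  have hderiv : ∀ᵐ x ∂(volume.restrict (Ioi (0:ℝ))),
      HasDerivAt T (-(f x * g x)) x := by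
    filter_upwards [ae_restrict_of_ae (ae_hasDerivAt_primitive h hInt),
      self_mem_ae_restrict (measurableSet_Ioi : MeasurableSet (Ioi (0:ℝ)))] with x hPx hx
    have h1 : HasDerivAt (fun u => C - P u) (-(h x)) x := by
      simpa using (hasDerivAt_const x C).fun_sub hPx
    have h2 : HasDerivAt T (-(h x)) x := by
      refine h1.congr_of_eventuallyEq ?_
      filter_upwards [isOpen_Ioi.mem_nhds hx] with u hu
      exact hTrep u hu
    have h3 : h x = f x * g x := Set.indicator_of_mem hx (fun y => f y * g y)
    rwa [h3] at h2
  -- bounds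
  have bound_a : ∀ s ∈ Ioi (0:ℝ), ‖T s‖ ≤ A * B := fun s hs =>
    (tail_norm_le s).trans (CS hf hg (le_of_lt hs))
  have bound_b : ∀ s ∈ Ioi (0:ℝ), 1 ≤ s → ‖T s‖ ≤ A' * B / s := by
    intro s hs h1s
    have hs0 : (0:ℝ) < s := hs
    rw [le_div_iff₀ hs0]
    calc ‖T s‖ * s = s * ‖T s‖ := mul_comm _ _
      _ ≤ s * ∫ y in Ioi s, ‖f y‖ * ‖g y‖ :=
          mul_le_mul_of_nonneg_left (tail_norm_le s) hs0.le
      _ ≤ ∫ y in Ioi s, ‖(y:ℂ) * f y‖ * ‖g y‖ := tail_weight_one hf hxf hg hs0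
      _ ≤ A' * B := CS hxf hg hs0.le
  have bound_d : ∀ s ∈ Ioi (0:ℝ), s ≤ 1 → ‖(s:ℂ) * T s‖ ≤ A * B := by
    intro s hs h1s
    have hs0 : (0:ℝ) < s := hs
    have hnorm : ‖(s:ℂ) * T s‖ = s * ‖T s‖ := by
      rw [norm_mul, Complex.norm_real, Real.norm_of_nonneg hs0.le]
    rw [hnorm]
    calc s * ‖T s‖ ≤ 1 * ‖T s‖ := mul_le_mul_of_nonneg_right h1s (norm_nonneg _)
      _ = ‖T s‖ := one_mul _
      _ ≤ A * B := bound_a s hs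
  have bound_c : ∀ s ∈ Ioi (0:ℝ), 1 ≤ s → ‖(s:ℂ) * T s‖ ≤ A' * B'' / s := by
    intro s hs h1s
    have hs0 : (0:ℝ) < s := hs
    have hnorm : ‖(s:ℂ) * T s‖ = s * ‖T s‖ := by
      rw [norm_mul, Complex.norm_real, Real.norm_of_nonneg hs0.le]
    rw [le_div_iff₀ hs0]
    calc ‖(s:ℂ) * T s‖ * s = s^2 * ‖T s‖ := by rw [hnorm]; ring
      _ ≤ s^2 * ∫ y in Ioi s, ‖f y‖ * ‖g y‖ :=
          mul_le_mul_of_nonneg_left (tail_norm_le s) (by positivity)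
      _ ≤ ∫ y in Ioi s, ‖(y:ℂ) * f y‖ * ‖(y:ℂ) * g y‖ := tail_weight_two hf hxf hg hxg hs0
      _ ≤ A' * B'' := CS hxf hxg hs0.le
  obtain ⟨mem1, n1⟩ := memLp_of_two_bounds T hTm (mul_nonneg hA0 hB0) (mul_nonneg hA'0 hB0)
    (fun x hx hx1 => bound_a x hx) bound_b
  obtain ⟨mem3, n3⟩ := memLp_of_two_bounds (fun x : ℝ => (x:ℂ) * T x) hxTm
    (mul_nonneg hA0 hB0) (mul_nonneg hA'0 hB''0) bound_d bound_c
  -- the middle norm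
  have hsup := sup_bound g g' hg hg' hgd
  have hmul_ae : ∀ᵐ x ∂(volume.restrict (Ioi (0:ℝ))), ‖f x * g x‖ ≤ (B + B') * ‖f x‖ := by
    filter_upwards [self_mem_ae_restrict (measurableSet_Ioi : MeasurableSet (Ioi (0:ℝ)))]
      with x hx
    rw [norm_mul, mul_comm]
    exact mul_le_mul_of_nonneg_right (hsup x hx) (norm_nonneg _)
  have n2 : (eLpNorm (fun x => -(f x * g x)) 2 (volume.restrict (Ioi (0:ℝ)))).toReal ≤
      (B + B') * A := by
    have e0 : eLpNorm (fun x => -(f x * g x)) 2 (volume.restrict (Ioi (0:ℝ))) =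
        eLpNorm (fun x => f x * g x) 2 (volume.restrict (Ioi (0:ℝ))) := by
      exact eLpNorm_neg _ _ _
    have hle := eLpNorm_le_mul_eLpNorm_of_ae_le_mul hmul_ae 2
    rw [e0]
    refine le_trans (ENNReal.toReal_mono ?_ hle) ?_
    · exact ENNReal.mul_ne_top ENNReal.ofReal_ne_top hf.eLpNorm_ne_top
    · rw [ENNReal.toReal_mul, ENNReal.toReal_ofReal (by positivity)]
  refine ⟨mem1, hderiv, mem3, ?_⟩
  have hN1 : normH01plus f = A + A' := rfl
  have hN2 : normH11plus g g' = B + B' + B'' := rfl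
  have hLHS : normH11plus T (fun x => -(f x * g x)) =
      (eLpNorm T 2 (volume.restrict (Ioi (0:ℝ)))).toReal +
      (eLpNorm (fun x => -(f x * g x)) 2 (volume.restrict (Ioi (0:ℝ)))).toReal +
      (eLpNorm (fun x : ℝ => (x:ℂ) * T x) 2 (volume.restrict (Ioi (0:ℝ)))).toReal := rfl
  rw [hLHS, hN1, hN2]
  nlinarith [mul_nonneg hA0 hB0, mul_nonneg hA'0 hB0, mul_nonneg hA0 hB'0,
    mul_nonneg hA'0 hB'0, mul_nonneg hA0 hB''0, mul_nonneg hA'0 hB''0,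
    mul_nonneg hA0 hB0, ENNReal.toReal_nonneg (a := eLpNorm T 2 (volume.restrict (Ioi (0:ℝ))))]
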